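/- Set f_{i,j,k} = m_{i,j,k}·F_{3i+j,k} ∈ K for all i,j ∈ ℤ and k ≥ −1. Then (f_{i,j,k}) satisfies the octahedron recurrence: f_{i,j,k−1}·f_{i,j,k+1} = f_{i−1,j,k}·f_{i+1,j,k} + f_{i,j−1,k}·f_{i,j+1,k} for all i,j ∈ ℤ and k ≥ 0. -/

import Mathlib

open scoped Classical

noncomputable section

/-- The field `K = ℚ(y₁,…,y_{2n})`, realized as the fraction field of the
polynomial ring in `2n` indeterminates indexed by `ZMod (2n)` (which builds in
the `2n`-periodicity of the indices). -/
abbrev KK (n : ℕ) : Type := FractionRing (MvPolynomial (ZMod (2*n)) ℚ)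

/-- The indeterminate `y_j` for `j ∈ ℤ`, with `y_{j+2n} = y_j`. -/
def yy (n : ℕ) (j : ℤ) : KK n :=
  algebraMap (MvPolynomial (ZMod (2*n)) ℚ) (KK n) (MvPolynomial.X (j : ZMod (2*n)))

namespace StmtAux

open Finset

variable {M : Type*} [CommMonoid M]

lemma Icc_left (a b : ℤ) (h : a ≤ b) : Icc a b = insert a (Icc (a+1) b) := by
  ext x; simp only [mem_Icc, mem_insert]; omega

lemma Icc_right (a b : ℤ) (h : a ≤ b) : Icc a b = insert b (Icc a (b-1)) := by
  ext x; simp only [mem_Icc, mem_insert]; omega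

lemma peelLeft (g : ℤ → M) (a b : ℤ) (h : a ≤ b) :
    ∏ x ∈ Icc a b, g x = g a * ∏ x ∈ Icc (a+1) b, g x := by
  rw [Icc_left a b h, Finset.prod_insert (by simp only [mem_Icc]; omega)]

lemma peelRight (g : ℤ → M) (a b : ℤ) (h : a ≤ b) :
    ∏ x ∈ Icc a b, g x = (∏ x ∈ Icc a (b-1), g x) * g b := by
  rw [Icc_right a b h, Finset.prod_insert (by simp only [mem_Icc]; omega), mul_comm]

lemma prodShift (g : ℤ → M) (a b c : ℤ) :
    ∏ x ∈ Icc a b, g (x + c) = ∏ x ∈ Icc (a+c) (b+c), g x := by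
  rw [← Finset.map_add_right_Icc, Finset.prod_map]; rfl

lemma prodShift' (g : ℤ → M) (a b c a' b' : ℤ) (ha : a' = a + c) (hb : b' = b + c) :
    ∏ x ∈ Icc a' b', g x = ∏ x ∈ Icc a b, g (x + c) := by
  subst ha hb; exact (prodShift g a b c).symm

lemma prodSplit (g : ℤ → M) (a b c : ℤ) (hab : a ≤ b) (hbc : b ≤ c + 1) :
    ∏ x ∈ Icc a c, g x = (∏ x ∈ Icc a (b-1), g x) * ∏ x ∈ Icc b c, g x := by
  rw [← Finset.prod_union (by
    rw [Finset.disjoint_left]; intro x hx hx'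
    simp only [mem_Icc] at hx hx'; omega)]
  apply Finset.prod_congr _ (fun _ _ => rfl)
  ext x; simp only [mem_union, mem_Icc]; omega

def Mp (g : ℤ → M) (a j : ℤ) : M :=
  ∏ l ∈ Icc 0 (j-1), ∏ mm ∈ Icc 0 l, g (a + j - 4*l + 6*mm - 1)

def Mn (g : ℤ → M) (a j : ℤ) : M :=
  ∏ l ∈ Icc j (-2), ∏ mm ∈ Icc (l+1) (-1), g (a + j - 4*l + 6*mm - 1)

def MM (g : ℤ → M) (a j : ℤ) : M := if 0 ≤ j then Mp g a j else Mn g a j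

lemma R1 (g : ℤ → M) (a j : ℤ) (hj : 1 ≤ j) :
    Mp g a (j+1) = g (a+j) * (Mp g (a-3) j * ∏ l ∈ Icc 0 (j-1), g (a+j+2+2*l)) := by
  unfold Mp
  rw [show j+1-1 = j from by ring, peelLeft _ 0 j (by omega)]
  have h0 : (∏ mm ∈ Icc (0:ℤ) 0, g (a+(j+1)-4*0+6*mm-1)) = g (a+j) := by
    rw [Finset.Icc_self, Finset.prod_singleton]; congr 1; ring
  rw [h0]
  congr 1
  rw [prodShift' (fun l => ∏ mm ∈ Icc 0 l, g (a+(j+1)-4*l+6*mm-1)) 0 (j-1) 1 (0+1) j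
    (by ring) (by ring)]
  rw [← Finset.prod_mul_distrib]
  apply Finset.prod_congr rfl
  intro x hx
  simp only [mem_Icc] at hx
  rw [peelRight (fun mm => g (a+(j+1)-4*(x+1)+6*mm-1)) 0 (x+1) (by omega),
    show x+1-1 = x from by ring]
  congr 1
  · apply Finset.prod_congr rfl; intro mm _; congr 1; ring
  · congr 1; ring

lemma R2 (g : ℤ → M) (a j : ℤ) (hj : 1 ≤ j) :
    Mp g (a+3) j = Mp g a (j-1) * ∏ l ∈ Icc 0 (j-1), g (a+j+2+2*l) := by
  unfold Mp
  have step : ∀ l ∈ Icc (0:ℤ) (j-1),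
      (∏ mm ∈ Icc 0 l, g ((a+3)+j-4*l+6*mm-1))
        = (∏ mm ∈ Icc 0 (l-1), g ((a+3)+j-4*l+6*mm-1)) * g (a+j+2+2*l) := by
    intro l hl
    simp only [mem_Icc] at hl
    rw [peelRight (fun mm => g ((a+3)+j-4*l+6*mm-1)) 0 l (by omega)]
    congr 1; congr 1; ring
  rw [Finset.prod_congr rfl step, Finset.prod_mul_distrib]
  congr 1
  rw [peelLeft (fun l => ∏ mm ∈ Icc 0 (l-1), g ((a+3)+j-4*l+6*mm-1)) 0 (j-1) (by omega)]
  have h0 : (∏ mm ∈ Icc (0:ℤ) (0-1), g ((a+3)+j-4*0+6*mm-1)) = 1 := by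
    rw [show (0:ℤ)-1 = -1 from by ring, Finset.Icc_eq_empty (by omega), Finset.prod_empty]
  rw [h0, one_mul]
  rw [prodShift' (fun l => ∏ mm ∈ Icc 0 (l-1), g ((a+3)+j-4*l+6*mm-1)) 0 (j-1-1) 1 (0+1) (j-1)
    (by ring) (by ring)]
  apply Finset.prod_congr rfl
  intro x hx
  rw [show x+1-1 = x from by ring]
  apply Finset.prod_congr rfl
  intro mm _
  congr 1; ring

lemma R1' (g : ℤ → M) (a j : ℤ) (hj : j ≤ -2) :
    Mn g (a-3) j = Mn g a (j+1) * ∏ l ∈ Icc (j+1) (-1), g (a+j+2*l) := by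
  unfold Mn
  rw [prodShift' (fun l => ∏ mm ∈ Icc (l+1) (-1), g ((a-3)+j-4*l+6*mm-1)) (j+1) (-1) (-1) j (-2)
    (by ring) (by ring)]
  have step : ∀ x ∈ Icc (j+1) (-1:ℤ),
      (∏ mm ∈ Icc ((x + -1)+1) (-1), g ((a-3)+j-4*(x + -1)+6*mm-1))
        = g (a+j+2*x) * ∏ mm ∈ Icc (x+1) (-1), g (a+j-4*x+6*mm) := by
    intro x hx
    simp only [mem_Icc] at hx
    have hxx : (x + -1) + 1 = x := by ring
    rw [hxx, peelLeft (fun mm => g ((a-3)+j-4*(x + -1)+6*mm-1)) x (-1) (by omega)]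
    congr 1
    · congr 1; ring
    · apply Finset.prod_congr rfl; intro mm _; congr 1; ring
  rw [Finset.prod_congr rfl step, Finset.prod_mul_distrib, mul_comm]
  congr 1
  rw [peelRight (fun x => ∏ mm ∈ Icc (x+1) (-1), g (a+j-4*x+6*mm)) (j+1) (-1) (by omega)]
  have h0 : (∏ mm ∈ Icc ((-1:ℤ)+1) (-1), g (a+j-4*(-1)+6*mm)) = 1 := by
    rw [Finset.Icc_eq_empty (by omega), Finset.prod_empty]
  rw [h0, mul_one, show (-1:ℤ)-1 = -2 from by ring]
  apply Finset.prod_congr rfl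
  intro x hx
  apply Finset.prod_congr rfl
  intro mm _
  congr 1; ring

lemma R2' (g : ℤ → M) (a j : ℤ) (hj : j ≤ -1) :
    Mn g a (j-1) = g (a+j) * (Mn g (a+3) j * ∏ l ∈ Icc j (-2), g (a+j+2+2*l)) := by
  unfold Mn
  rw [prodShift' (fun l => ∏ mm ∈ Icc (l+1) (-1), g (a+(j-1)-4*l+6*mm-1)) j (-1) (-1) (j-1) (-2)
    (by ring) (by ring)]
  have step : ∀ x ∈ Icc j (-1:ℤ),
      (∏ mm ∈ Icc ((x + -1)+1) (-1), g (a+(j-1)-4*(x + -1)+6*mm-1))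
        = g (a+j+2*x+2) * ∏ mm ∈ Icc (x+1) (-1), g (a+j-4*x+6*mm+2) := by
    intro x hx
    simp only [mem_Icc] at hx
    have hxx : (x + -1) + 1 = x := by ring
    rw [hxx, peelLeft (fun mm => g (a+(j-1)-4*(x + -1)+6*mm-1)) x (-1) (by omega)]
    congr 1
    · congr 1; ring
    · apply Finset.prod_congr rfl; intro mm _; congr 1; ring
  rw [Finset.prod_congr rfl step,
    peelRight (fun x => g (a+j+2*x+2) * ∏ mm ∈ Icc (x+1) (-1), g (a+j-4*x+6*mm+2)) j (-1)
      (by omega)]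
  have h1 : (∏ mm ∈ Icc ((-1:ℤ)+1) (-1), g (a+j-4*(-1)+6*mm+2)) = 1 := by
    rw [Finset.Icc_eq_empty (by omega), Finset.prod_empty]
  rw [h1, mul_one, show a+j+2*(-1)+2 = a+j from by ring, mul_comm, show (-1:ℤ)-1 = -2 from by ring]
  congr 1
  rw [Finset.prod_mul_distrib, mul_comm]
  congr 1
  · apply Finset.prod_congr rfl; intro x _
    apply Finset.prod_congr rfl; intro mm _
    congr 1; ring
  · apply Finset.prod_congr rfl; intro x _
    congr 1; ring

lemma Qshift (g : ℤ → M) (a j : ℤ) :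
    (∏ l ∈ Icc j (-2:ℤ), g (a+j+2+2*l)) = ∏ l ∈ Icc (j+1) (-1:ℤ), g (a+j+2*l) := by
  rw [prodShift' (fun l => g (a+j+2*l)) j (-2) 1 (j+1) (-1) (by ring) (by ring)]
  apply Finset.prod_congr rfl; intro x _; congr 1; ring

lemma MpZero (g : ℤ → M) (a : ℤ) : Mp g a 0 = 1 := by
  unfold Mp; rw [show (0:ℤ)-1 = -1 from by ring, Finset.Icc_eq_empty (by omega), prod_empty]

lemma MnNegOne (g : ℤ → M) (a : ℤ) : Mn g a (-1) = 1 := by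
  unfold Mn; rw [Finset.Icc_eq_empty (by omega), prod_empty]

lemma MpOne (g : ℤ → M) (a : ℤ) : Mp g a 1 = g a := by
  unfold Mp
  rw [show (1:ℤ)-1 = 0 from by ring, Finset.Icc_self, Finset.prod_singleton,
    Finset.Icc_self, Finset.prod_singleton]
  congr 1; ring

lemma MnNegTwo (g : ℤ → M) (a : ℤ) : Mn g a (-2) = g (a-1) := by
  unfold Mn
  rw [Finset.Icc_self, Finset.prod_singleton, show (-2:ℤ)+1 = -1 from by ring,
    Finset.Icc_self, Finset.prod_singleton]
  congr 1; ring

lemma B0 (g : ℤ → M) (a j : ℤ) :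
    MM g a (j-1) * MM g a (j+1) = g (a+j) * (MM g (a-3) j * MM g (a+3) j) := by
  unfold MM
  rcases le_or_gt 1 j with hj | hj
  · rw [if_pos (by omega : (0:ℤ) ≤ j-1), if_pos (by omega : (0:ℤ) ≤ j+1),
      if_pos (by omega : (0:ℤ) ≤ j), if_pos (by omega : (0:ℤ) ≤ j)]
    rw [R1 g a j hj, R2 g a j hj]
    ac_rfl
  rcases le_or_gt j (-2) with hj2 | hj2
  · rw [if_neg (by omega), if_neg (by omega), if_neg (by omega), if_neg (by omega)]
    rw [R2' g a j (by omega), R1' g a j hj2, Qshift]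
    ac_rfl
  · interval_cases j
    · rw [if_neg (by omega), if_pos (by omega), if_neg (by omega), if_neg (by omega)]
      rw [show (-1:ℤ)-1 = -2 from by norm_num, MnNegTwo, show (-1:ℤ)+1 = 0 from by norm_num,
        MpZero, MnNegOne, MnNegOne, show a + -1 = a-1 from by ring]
      simp
    · rw [if_neg (by omega), if_pos (by omega), if_pos (by omega), if_pos (by omega)]
      rw [show (0:ℤ)-1 = -1 from by norm_num, MnNegOne, show (0:ℤ)+1 = 1 from by norm_num,
        MpOne, MpZero, MpZero, show a + 0 = a from by ring]
      simp

lemma Pident (g : ℤ → M) (c t : ℤ) (ht : 1 ≤ t) :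
    (∏ s ∈ Icc (-t) t, g (c-3+3*s)) * (∏ s ∈ Icc (-t) t, g (c+3+3*s))
      = (∏ s ∈ Icc (-(t+1)) (t+1), g (c+3*s)) * (∏ s ∈ Icc (-(t-1)) (t-1), g (c+3*s)) := by
  have e1 : (∏ s ∈ Icc (-t) t, g (c-3+3*s)) = ∏ s ∈ Icc (-(t+1)) (t-1), g (c+3*s) := by
    rw [prodShift' (fun s => g (c+3*s)) (-t) t (-1) (-(t+1)) (t-1) (by ring) (by ring)]
    apply Finset.prod_congr rfl; intro x _; congr 1; ring
  have e2 : (∏ s ∈ Icc (-t) t, g (c+3+3*s)) = ∏ s ∈ Icc (-(t-1)) (t+1), g (c+3*s) := by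
    rw [prodShift' (fun s => g (c+3*s)) (-t) t 1 (-(t-1)) (t+1) (by ring) (by ring)]
    apply Finset.prod_congr rfl; intro x _; congr 1; ring
  rw [e1, e2,
    prodSplit (fun s => g (c+3*s)) (-(t+1)) (-(t-1)) (t-1) (by omega) (by omega),
    prodSplit (fun s => g (c+3*s)) (-(t-1)) t (t+1) (by omega) (by omega),
    prodSplit (fun s => g (c+3*s)) (-(t+1)) (-(t-1)) (t+1) (by omega) (by omega),
    prodSplit (fun s => g (c+3*s)) (-(t-1)) t (t+1) (by omega) (by omega)]
  ac_rfl

section Pos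

variable (n : ℕ)

def Pos (x : KK n) : Prop :=
  ∃ p q : MvPolynomial (ZMod (2*n)) ℚ, (∀ c, 0 ≤ p.coeff c) ∧ p ≠ 0 ∧
    (∀ c, 0 ≤ q.coeff c) ∧ q ≠ 0 ∧
    x = algebraMap (MvPolynomial (ZMod (2*n)) ℚ) (KK n) p /
        algebraMap (MvPolynomial (ZMod (2*n)) ℚ) (KK n) q

lemma map_ne {p : MvPolynomial (ZMod (2*n)) ℚ} (hp : p ≠ 0) :
    algebraMap (MvPolynomial (ZMod (2*n)) ℚ) (KK n) p ≠ 0 :=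
  (map_ne_zero_iff _ (IsFractionRing.injective _ _)).2 hp

lemma pos_ne_zero {x : KK n} (h : Pos n x) : x ≠ 0 := by
  obtain ⟨p, q, _, hp, _, hq, rfl⟩ := h
  exact div_ne_zero (map_ne n hp) (map_ne n hq)

lemma coeff_one_nonneg : ∀ c, 0 ≤ (1 : MvPolynomial (ZMod (2*n)) ℚ).coeff c := by
  intro c; rw [MvPolynomial.coeff_one]; split <;> norm_num

lemma pos_one : Pos n 1 :=
  ⟨1, 1, coeff_one_nonneg n, one_ne_zero, coeff_one_nonneg n, one_ne_zero, by simp⟩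

lemma pos_y (j : ℤ) : Pos n (yy n j) := by
  refine ⟨MvPolynomial.X ((j : ZMod (2*n))), 1, ?_, MvPolynomial.X_ne_zero _,
    coeff_one_nonneg n, one_ne_zero, by simp [yy]⟩
  intro c; rw [MvPolynomial.coeff_X']; split <;> norm_num

lemma coeff_nonneg_mul {p q : MvPolynomial (ZMod (2*n)) ℚ}
    (hp : ∀ c, 0 ≤ p.coeff c) (hq : ∀ c, 0 ≤ q.coeff c) : ∀ c, 0 ≤ (p*q).coeff c := by
  intro c; rw [MvPolynomial.coeff_mul]
  exact Finset.sum_nonneg fun x _ => mul_nonneg (hp _) (hq _)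

lemma add_ne_zero' {p q : MvPolynomial (ZMod (2*n)) ℚ}
    (hp : ∀ c, 0 ≤ p.coeff c) (hq : ∀ c, 0 ≤ q.coeff c) (hp0 : p ≠ 0) : p + q ≠ 0 := by
  obtain ⟨c, hc⟩ := MvPolynomial.ne_zero_iff.1 hp0
  intro h
  have h0 : (p+q).coeff c = 0 := by rw [h]; simp
  rw [MvPolynomial.coeff_add] at h0
  have h1 : 0 < p.coeff c := lt_of_le_of_ne (hp c) (Ne.symm hc)
  have h2 := hq c
  linarith

lemma pos_mul {x y : KK n} (hx : Pos n x) (hy : Pos n y) : Pos n (x*y) := by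
  obtain ⟨p, q, hpc, hp, hqc, hq, rfl⟩ := hx
  obtain ⟨p', q', hpc', hp', hqc', hq', rfl⟩ := hy
  exact ⟨p*p', q*q', coeff_nonneg_mul n hpc hpc', mul_ne_zero hp hp',
    coeff_nonneg_mul n hqc hqc', mul_ne_zero hq hq',
    by rw [map_mul, map_mul, div_mul_div_comm]⟩

lemma pos_inv {x : KK n} (hx : Pos n x) : Pos n x⁻¹ := by
  obtain ⟨p, q, hpc, hp, hqc, hq, rfl⟩ := hx
  exact ⟨q, p, hqc, hq, hpc, hp, by rw [inv_div]⟩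

lemma pos_div {x y : KK n} (hx : Pos n x) (hy : Pos n y) : Pos n (x/y) := by
  rw [div_eq_mul_inv]; exact pos_mul n hx (pos_inv n hy)

lemma pos_add {x y : KK n} (hx : Pos n x) (hy : Pos n y) : Pos n (x+y) := by
  obtain ⟨p, q, hpc, hp, hqc, hq, rfl⟩ := hx
  obtain ⟨p', q', hpc', hp', hqc', hq', rfl⟩ := hy
  refine ⟨p*q' + p'*q, q*q', ?_, ?_, coeff_nonneg_mul n hqc hqc', mul_ne_zero hq hq', ?_⟩
  · intro c; rw [MvPolynomial.coeff_add]
    exact add_nonneg (coeff_nonneg_mul n hpc hqc' c) (coeff_nonneg_mul n hpc' hqc c)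
  · exact add_ne_zero' n (coeff_nonneg_mul n hpc hqc') (coeff_nonneg_mul n hpc' hqc)
      (mul_ne_zero hp hq')
  · rw [div_add_div _ _ (map_ne n hq) (map_ne n hq'), map_add, map_mul, map_mul, map_mul]
    ring

lemma pos_prod {ι : Type*} (s : Finset ι) (f : ι → KK n) (h : ∀ x ∈ s, Pos n (f x)) :
    Pos n (∏ x ∈ s, f x) :=
  Finset.prod_induction f (Pos n) (fun _ _ => pos_mul n) (pos_one n) h

end Pos

end StmtAux

/-- **Proposition 6.1.**  With `F_{j,k}` defined by the `F`-polynomial recursion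
and the Laurent monomials `m_{i,j,k}` defined as in Section 6, the array
`f_{i,j,k} = m_{i,j,k} · F_{3i+j,k}` satisfies the octahedron recurrence
`f_{i,j,k−1} f_{i,j,k+1} = f_{i−1,j,k} f_{i+1,j,k} + f_{i,j−1,k} f_{i,j+1,k}`
for all `i, j ∈ ℤ` and `k ≥ 0`. -/
theorem stmt8 (n : ℕ) (hn : 2 ≤ n)
    (F : ℤ → ℤ → KK n) (m : ℤ → ℤ → ℤ → KK n) (f : ℤ → ℤ → ℤ → KK n)
    (hF1 : ∀ j : ℤ, F j (-1) = 1)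
    (hF2 : ∀ j : ℤ, F j 0 = 1)
    (hF3 : ∀ j k : ℤ, 0 ≤ k →
      F j (k+1) = (F (j-3) k * F (j+3) k +
        (∏ i ∈ Finset.Icc (-k) k, yy n (j+3*i)) * F (j-1) k * F (j+1) k) /
        F j (k-1))
    (hm0 : ∀ i : ℤ, m i (-1) 0 = 1 ∧ m i 0 0 = 1)
    (hm1 : ∀ i j : ℤ, 1 ≤ j → m i j 0 =
      ∏ l ∈ Finset.Icc 0 (j-1), ∏ mm ∈ Finset.Icc 0 l, yy n (3*i+j-4*l+6*mm-1))
    (hm2 : ∀ i j : ℤ, j ≤ -2 → m i j 0 =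
      ∏ l ∈ Finset.Icc j (-2), ∏ mm ∈ Finset.Icc (l+1) (-1), yy n (3*i+j-4*l+6*mm-1))
    (hm3 : ∀ i j : ℤ, m i j (-1) = (m i j 0)⁻¹)
    (hm4 : ∀ i j k : ℤ, 1 ≤ k →
      m i j k = m (i-1) j (k-1) * m (i+1) j (k-1) / m i j (k-2))
    (hf : ∀ i j k : ℤ, f i j k = m i j k * F (3*i+j) k) :
    ∀ i j k : ℤ, 0 ≤ k →
      f i j (k-1) * f i j (k+1) =
        f (i-1) j k * f (i+1) j k + f i (j-1) k * f i (j+1) k := by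
  have hyne : ∀ t : ℤ, yy n t ≠ 0 := fun t => StmtAux.pos_ne_zero n (StmtAux.pos_y n t)
  -- m at level 0 equals the explicit monomial MM
  have hmMM : ∀ i j : ℤ, m i j 0 = StmtAux.MM (yy n) (3*i) j := by
    intro i j
    rcases le_or_gt 1 j with h | h
    · rw [hm1 i j h, StmtAux.MM, if_pos (by omega : (0:ℤ) ≤ j)]; rfl
    rcases le_or_gt j (-2) with h2 | h2
    · rw [hm2 i j h2, StmtAux.MM, if_neg (by omega)]; rfl
    · interval_cases j
      · rw [(hm0 i).1, StmtAux.MM, if_neg (by omega), StmtAux.MnNegOne]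
      · rw [(hm0 i).2, StmtAux.MM, if_pos le_rfl, StmtAux.MpZero]
  -- the level-0 octahedron identity for the monomials
  have hBm0 : ∀ i j : ℤ, m i (j-1) 0 * m i (j+1) 0
      = yy n (3*i+j) * (m (i-1) j 0 * m (i+1) j 0) := by
    intro i j
    rw [hmMM i (j-1), hmMM i (j+1), hmMM (i-1) j, hmMM (i+1) j,
      show 3*(i-1) = 3*i-3 from by ring, show 3*(i+1) = 3*i+3 from by ring]
    exact StmtAux.B0 (yy n) (3*i) j
  -- nonvanishing of the monomials
  have hm0ne : ∀ i j : ℤ, m i j 0 ≠ 0 := by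
    intro i j
    rw [hmMM i j]
    unfold StmtAux.MM StmtAux.Mp StmtAux.Mn
    split
    · exact Finset.prod_ne_zero_iff.2 fun l _ =>
        Finset.prod_ne_zero_iff.2 fun mm _ => hyne _
    · exact Finset.prod_ne_zero_iff.2 fun l _ =>
        Finset.prod_ne_zero_iff.2 fun mm _ => hyne _
  have hmne : ∀ t : ℕ, ∀ i j : ℤ, m i j ((t:ℤ)-1) ≠ 0 := by
    intro t
    induction t using Nat.strong_induction_on with
    | _ t ih =>
      rcases t with _ | _ | t
      · intro i j
        push_cast
        rw [hm3]
        exact inv_ne_zero (hm0ne i j)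
      · intro i j
        push_cast
        exact hm0ne i j
      · intro i j
        have h1 := ih (t+1) (by omega) (i-1) j
        have h2 := ih (t+1) (by omega) (i+1) j
        have h3 := ih t (by omega) i j
        rw [show ((t+1:ℕ):ℤ)-1 = (t:ℤ) by push_cast; ring] at h1 h2
        push_cast
        rw [show (t:ℤ)+1+1-1 = (t:ℤ)+1 by ring,
          hm4 i j ((t:ℤ)+1) (by omega),
          show (t:ℤ)+1-1 = (t:ℤ) by ring,
          show (t:ℤ)+1-2 = (t:ℤ)-1 by ring]
        exact div_ne_zero (mul_ne_zero h1 h2) h3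
  have hmne' : ∀ k : ℤ, -1 ≤ k → ∀ i j : ℤ, m i j k ≠ 0 := by
    intro k hk i j
    obtain ⟨t, rfl⟩ : ∃ t : ℕ, k = (t:ℤ)-1 := ⟨(k+1).toNat, by omega⟩
    exact hmne t i j
  -- the "vertical" recursion, cleared of denominators
  have hrec : ∀ i j k : ℤ, 0 ≤ k →
      m i j (k+1) * m i j (k-1) = m (i-1) j k * m (i+1) j k := by
    intro i j k hk
    rw [hm4 i j (k+1) (by omega), show k+1-1 = k from by ring,
      show k+1-2 = k-1 from by ring, div_mul_cancel₀ _ (hmne' (k-1) (by omega) i j)]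
  -- key product identity of the coefficient products
  have hP : ∀ i j t : ℤ, 1 ≤ t →
      (∏ s ∈ Finset.Icc (-t) t, yy n (3*(i-1)+j+3*s)) *
        (∏ s ∈ Finset.Icc (-t) t, yy n (3*(i+1)+j+3*s))
      = (∏ s ∈ Finset.Icc (-(t+1)) (t+1), yy n (3*i+j+3*s)) *
        (∏ s ∈ Finset.Icc (-(t-1)) (t-1), yy n (3*i+j+3*s)) := by
    intro i j t ht
    have h := StmtAux.Pident (yy n) (3*i+j) t ht
    have c1 : ∀ s : ℤ, 3*i+j-3+3*s = 3*(i-1)+j+3*s := fun s => by ring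
    have c2 : ∀ s : ℤ, 3*i+j+3+3*s = 3*(i+1)+j+3*s := fun s => by ring
    calc (∏ s ∈ Finset.Icc (-t) t, yy n (3*(i-1)+j+3*s)) *
          (∏ s ∈ Finset.Icc (-t) t, yy n (3*(i+1)+j+3*s))
        = (∏ s ∈ Finset.Icc (-t) t, yy n (3*i+j-3+3*s)) *
          (∏ s ∈ Finset.Icc (-t) t, yy n (3*i+j+3+3*s)) := by
          congr 1 <;> (apply Finset.prod_congr rfl; intro s _; congr 1; ring)
      _ = _ := h
  -- the octahedron identity for the monomials, all levels
  have hB : ∀ t : ℕ, ∀ i j : ℤ,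
      m i (j-1) (t:ℤ) * m i (j+1) (t:ℤ)
        = (∏ s ∈ Finset.Icc (-(t:ℤ)) (t:ℤ), yy n (3*i+j+3*s)) *
          (m i j ((t:ℤ)-1) * m i j ((t:ℤ)+1)) := by
    intro t
    induction t using Nat.strong_induction_on with
    | _ t ih =>
      rcases t with _ | _ | t
      · -- t = 0
        intro i j
        push_cast
        rw [hm3, hm4 i j 1 le_rfl, show (1:ℤ)-1 = 0 by norm_num,
          show (1:ℤ)-2 = -1 by norm_num, hm3,
          mul_comm ((m i j 0)⁻¹) (m (i-1) j 0 * m (i+1) j 0 / (m i j 0)⁻¹),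
          div_mul_cancel₀ _ (inv_ne_zero (hm0ne i j))]
        rw [neg_zero, Finset.Icc_self, Finset.prod_singleton,
          show 3*i+j+3*0 = 3*i+j by ring]
        exact hBm0 i j
      · -- t = 1
        intro i j
        have exp1 : ∀ i' j' : ℤ, m i' j' 1 = m (i'-1) j' 0 * m (i'+1) j' 0 * m i' j' 0 := by
          intro i' j'
          rw [hm4 i' j' 1 le_rfl, show (1:ℤ)-1 = 0 by norm_num,
            show (1:ℤ)-2 = -1 by norm_num, hm3, div_eq_mul_inv, inv_inv]
        have E1 : m (i-1) j 1 = m (i-2) j 0 * m i j 0 * m (i-1) j 0 := by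
          have h := exp1 (i-1) j
          rwa [show i-1-1 = i-2 by ring, show i-1+1 = i by ring] at h
        have E2 : m (i+1) j 1 = m i j 0 * m (i+2) j 0 * m (i+1) j 0 := by
          have h := exp1 (i+1) j
          rwa [show i+1-1 = i by ring, show i+1+1 = i+2 by ring] at h
        have e1 : m (i-1) (j-1) 0 * m (i-1) (j+1) 0
            = yy n (3*(i-1)+j) * (m (i-2) j 0 * m i j 0) := by
          have h := hBm0 (i-1) j
          rwa [show i-1-1 = i-2 by ring, show i-1+1 = i by ring,
            show 3*(i-1)+j = 3*(i-1)+j from rfl] at h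
        have e2 : m (i+1) (j-1) 0 * m (i+1) (j+1) 0
            = yy n (3*(i+1)+j) * (m i j 0 * m (i+2) j 0) := by
          have h := hBm0 (i+1) j
          rwa [show i+1-1 = i by ring, show i+1+1 = i+2 by ring] at h
        have e3 := hBm0 i j
        have expM2 : m i j 2 = m (i-1) j 1 * m (i+1) j 1 / m i j 0 := by
          rw [hm4 i j 2 (by norm_num), show (2:ℤ)-1 = 1 by norm_num,
            show (2:ℤ)-2 = 0 by norm_num]
        push_cast
        have hIcc : Finset.Icc (-1:ℤ) 1 = {-1, 0, 1} := by
          ext x; simp only [Finset.mem_Icc, Finset.mem_insert, Finset.mem_singleton]; omega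
        rw [hIcc, show ({-1, 0, 1} : Finset ℤ) = insert (-1:ℤ) (insert 0 {1}) from rfl,
          Finset.prod_insert (by decide), Finset.prod_insert (by decide),
          Finset.prod_singleton,
          show 3*i+j+3*(-1) = 3*(i-1)+j by ring, show 3*i+j+3*0 = 3*i+j by ring,
          show 3*i+j+3*1 = 3*(i+1)+j by ring]
        have hM : m i j 0 * m i j 2
            = m (i-2) j 0 * m i j 0 * m (i-1) j 0 * (m i j 0 * m (i+2) j 0 * m (i+1) j 0) := by
          rw [expM2, E1, E2,
            mul_comm (m i j 0)
              (m (i-2) j 0 * m i j 0 * m (i-1) j 0 * (m i j 0 * m (i+2) j 0 * m (i+1) j 0)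
                / m i j 0),
            div_mul_cancel₀ _ (hm0ne i j)]
        rw [exp1 i (j-1), exp1 i (j+1), hM]
        linear_combination (m (i+1) (j-1) 0 * m (i+1) (j+1) 0 * (m i (j-1) 0 * m i (j+1) 0)) * e1
          + (yy n (3*(i-1)+j) * (m (i-2) j 0 * m i j 0) * (m i (j-1) 0 * m i (j+1) 0)) * e2
          + (yy n (3*(i-1)+j) * (m (i-2) j 0 * m i j 0) *
            (yy n (3*(i+1)+j) * (m i j 0 * m (i+2) j 0))) * e3
      · -- t + 2, inductive step
        intro i j
        have hA : m (i-1) (j-1) ((t:ℤ)+1) * m (i-1) (j+1) ((t:ℤ)+1)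
            = (∏ s ∈ Finset.Icc (-((t:ℤ)+1)) ((t:ℤ)+1), yy n (3*(i-1)+j+3*s)) *
              (m (i-1) j (t:ℤ) * m (i-1) j ((t:ℤ)+2)) := by
          have h := ih (t+1) (by omega) (i-1) j
          push_cast at h
          rwa [show (t:ℤ)+1-1 = (t:ℤ) by ring, show (t:ℤ)+1+1 = (t:ℤ)+2 by ring] at h
        have hBb : m (i+1) (j-1) ((t:ℤ)+1) * m (i+1) (j+1) ((t:ℤ)+1)
            = (∏ s ∈ Finset.Icc (-((t:ℤ)+1)) ((t:ℤ)+1), yy n (3*(i+1)+j+3*s)) *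
              (m (i+1) j (t:ℤ) * m (i+1) j ((t:ℤ)+2)) := by
          have h := ih (t+1) (by omega) (i+1) j
          push_cast at h
          rwa [show (t:ℤ)+1-1 = (t:ℤ) by ring, show (t:ℤ)+1+1 = (t:ℤ)+2 by ring] at h
        have hC : m i (j-1) (t:ℤ) * m i (j+1) (t:ℤ)
            = (∏ s ∈ Finset.Icc (-(t:ℤ)) (t:ℤ), yy n (3*i+j+3*s)) *
              (m i j ((t:ℤ)-1) * m i j ((t:ℤ)+1)) := ih t (by omega) i j
        have r1 : m i (j-1) ((t:ℤ)+2) * m i (j-1) (t:ℤ)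
            = m (i-1) (j-1) ((t:ℤ)+1) * m (i+1) (j-1) ((t:ℤ)+1) := by
          have h := hrec i (j-1) ((t:ℤ)+1) (by positivity)
          rwa [show (t:ℤ)+1+1 = (t:ℤ)+2 by ring, show (t:ℤ)+1-1 = (t:ℤ) by ring] at h
        have r2 : m i (j+1) ((t:ℤ)+2) * m i (j+1) (t:ℤ)
            = m (i-1) (j+1) ((t:ℤ)+1) * m (i+1) (j+1) ((t:ℤ)+1) := by
          have h := hrec i (j+1) ((t:ℤ)+1) (by positivity)
          rwa [show (t:ℤ)+1+1 = (t:ℤ)+2 by ring, show (t:ℤ)+1-1 = (t:ℤ) by ring] at h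
        have r3 : m i j ((t:ℤ)+3) * m i j ((t:ℤ)+1)
            = m (i-1) j ((t:ℤ)+2) * m (i+1) j ((t:ℤ)+2) := by
          have h := hrec i j ((t:ℤ)+2) (by positivity)
          rwa [show (t:ℤ)+2+1 = (t:ℤ)+3 by ring, show (t:ℤ)+2-1 = (t:ℤ)+1 by ring] at h
        have r4 : m i j ((t:ℤ)+1) * m i j ((t:ℤ)-1) = m (i-1) j (t:ℤ) * m (i+1) j (t:ℤ) := by
          have h := hrec i j (t:ℤ) (by positivity)
          exact h
        have hp : (∏ s ∈ Finset.Icc (-((t:ℤ)+1)) ((t:ℤ)+1), yy n (3*(i-1)+j+3*s)) *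
              (∏ s ∈ Finset.Icc (-((t:ℤ)+1)) ((t:ℤ)+1), yy n (3*(i+1)+j+3*s))
            = (∏ s ∈ Finset.Icc (-((t:ℤ)+2)) ((t:ℤ)+2), yy n (3*i+j+3*s)) *
              (∏ s ∈ Finset.Icc (-(t:ℤ)) (t:ℤ), yy n (3*i+j+3*s)) := by
          have h := hP i j ((t:ℤ)+1) (by omega)
          rwa [show (t:ℤ)+1+1 = (t:ℤ)+2 by ring, show (t:ℤ)+1-1 = (t:ℤ) by ring] at h
        have hCne : (∏ s ∈ Finset.Icc (-(t:ℤ)) (t:ℤ), yy n (3*i+j+3*s)) *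
            (m i j ((t:ℤ)-1) * m i j ((t:ℤ)+1)) ≠ 0 :=
          mul_ne_zero (Finset.prod_ne_zero_iff.2 fun s _ => hyne _)
            (mul_ne_zero (hmne' _ (by omega) i j) (hmne' _ (by omega) i j))
        push_cast
        rw [show (t:ℤ)+1+1-1 = (t:ℤ)+1 by ring, show (t:ℤ)+1+1+1 = (t:ℤ)+3 by ring,
          show -((t:ℤ)+1+1) = -((t:ℤ)+2) by ring, show (t:ℤ)+1+1 = (t:ℤ)+2 by ring]
        apply mul_right_cancel₀ hCne
        linear_combination (-(m i (j-1) ((t:ℤ)+2) * m i (j+1) ((t:ℤ)+2))) * hC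
          + (m i (j+1) ((t:ℤ)+2) * m i (j+1) (t:ℤ)) * r1
          + (m (i-1) (j-1) ((t:ℤ)+1) * m (i+1) (j-1) ((t:ℤ)+1)) * r2
          + (m (i+1) (j-1) ((t:ℤ)+1) * m (i+1) (j+1) ((t:ℤ)+1)) * hA
          + ((∏ s ∈ Finset.Icc (-((t:ℤ)+1)) ((t:ℤ)+1), yy n (3*(i-1)+j+3*s)) *
              (m (i-1) j (t:ℤ) * m (i-1) j ((t:ℤ)+2))) * hBb
          + (m (i-1) j (t:ℤ) * m (i-1) j ((t:ℤ)+2) * (m (i+1) j (t:ℤ) * m (i+1) j ((t:ℤ)+2)))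
            * hp
          + (-((∏ s ∈ Finset.Icc (-((t:ℤ)+2)) ((t:ℤ)+2), yy n (3*i+j+3*s)) *
              (∏ s ∈ Finset.Icc (-(t:ℤ)) (t:ℤ), yy n (3*i+j+3*s)) *
              (m (i-1) j ((t:ℤ)+2) * m (i+1) j ((t:ℤ)+2)))) * r4
          + (-((∏ s ∈ Finset.Icc (-((t:ℤ)+2)) ((t:ℤ)+2), yy n (3*i+j+3*s)) *
              (∏ s ∈ Finset.Icc (-(t:ℤ)) (t:ℤ), yy n (3*i+j+3*s)) *
              (m i j ((t:ℤ)+1) * m i j ((t:ℤ)-1)))) * r3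
  have hB' : ∀ i j k : ℤ, 0 ≤ k →
      m i (j-1) k * m i (j+1) k
        = (∏ s ∈ Finset.Icc (-k) k, yy n (3*i+j+3*s)) * (m i j (k-1) * m i j (k+1)) := by
    intro i j k hk
    obtain ⟨t, rfl⟩ : ∃ t : ℕ, k = (t:ℤ) := ⟨k.toNat, by omega⟩
    exact hB t i j
  -- positivity (hence nonvanishing) of the F-polynomials
  have hFpos : ∀ t : ℕ, ∀ j : ℤ, StmtAux.Pos n (F j ((t:ℤ)-1)) := by
    intro t
    induction t using Nat.strong_induction_on with
    | _ t ih =>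
      rcases t with _ | _ | t
      · intro j
        push_cast
        rw [hF1]
        exact StmtAux.pos_one n
      · intro j
        push_cast
        rw [hF2]
        exact StmtAux.pos_one n
      · intro j
        have hFt : ∀ j' : ℤ, StmtAux.Pos n (F j' (t:ℤ)) := by
          intro j'
          have h := ih (t+1) (by omega) j'
          rwa [show ((t+1:ℕ):ℤ)-1 = (t:ℤ) by push_cast; ring] at h
        have hFt1 : StmtAux.Pos n (F j ((t:ℤ)-1)) := ih t (by omega) j
        push_cast
        rw [show (t:ℤ)+1+1-1 = (t:ℤ)+1 by ring, hF3 j (t:ℤ) (by positivity)]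
        exact StmtAux.pos_div n
          (StmtAux.pos_add n (StmtAux.pos_mul n (hFt _) (hFt _))
            (StmtAux.pos_mul n (StmtAux.pos_mul n
              (StmtAux.pos_prod n _ _ (fun s _ => StmtAux.pos_y n _)) (hFt _)) (hFt _)))
          hFt1
  have hFne : ∀ k : ℤ, -1 ≤ k → ∀ j : ℤ, F j k ≠ 0 := by
    intro k hk j
    obtain ⟨t, rfl⟩ : ∃ t : ℕ, k = (t:ℤ)-1 := ⟨(k+1).toNat, by omega⟩
    exact StmtAux.pos_ne_zero n (hFpos t j)
  -- the F-recursion, cleared of denominators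
  have hFA : ∀ j' k : ℤ, 0 ≤ k →
      F j' (k-1) * F j' (k+1)
        = F (j'-3) k * F (j'+3) k +
          (∏ s ∈ Finset.Icc (-k) k, yy n (j'+3*s)) * F (j'-1) k * F (j'+1) k := by
    intro j' k hk
    rw [hF3 j' k hk, mul_comm, div_mul_cancel₀ _ (hFne (k-1) (by omega) j')]
  -- final assembly
  intro i j k hk
  have FA := hFA (3*i+j) k hk
  have MA := hrec i j k hk
  have MB := hB' i j k hk
  rw [hf i j (k-1), hf i j (k+1), hf (i-1) j k, hf (i+1) j k, hf i (j-1) k, hf i (j+1) k,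
    show 3*(i-1)+j = 3*i+j-3 by ring, show 3*(i+1)+j = 3*i+j+3 by ring,
    show 3*i+(j-1) = 3*i+j-1 by ring, show 3*i+(j+1) = 3*i+j+1 by ring]
  linear_combination (m i j (k-1) * m i j (k+1)) * FA
    + (F (3*i+j-3) k * F (3*i+j+3) k) * MA
    - (F (3*i+j-1) k * F (3*i+j+1) k) * MB
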